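/- Off-by-ℓ Zames–Falb ρ-hard IQC. Let n ∈ ℕ and let g : ℝⁿ → ℝ be an admissible potential with gradient ∇g. Let ρ ∈ (0,1], γ ∈ (0,1], and ℓ ≥ 1 a natural number. Let y : ℕ → ℝⁿ be any sequence and set u_k = ∇g(y_k), adopting the convention y_j = 0 for j < 0. Then for every T ∈ ℕ: ∑_{k=0}^{T} ρ^{−2k} ⟨u_k, y_k − γ·ρ^{2ℓ}·y_{k−ℓ}⟩ ≥ 0. -/

import Mathlib

open scoped RealInnerProductSpace

lemma zf_grad_ineq {n : ℕ} {g : EuclideanSpace ℝ (Fin n) → ℝ}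
    (hconv : ConvexOn ℝ Set.univ g) (hdiff : Differentiable ℝ g)
    (a b : EuclideanSpace ℝ (Fin n)) :
    g a + ⟪gradient g a, b - a⟫ ≤ g b := by
  have hgrad : HasFDerivAt g ((InnerProductSpace.toDual ℝ _) (gradient g a)) a := by
    rw [← hasGradientAt_iff_hasFDerivAt]
    exact (hdiff a).hasGradientAt
  set L : ℝ → EuclideanSpace ℝ (Fin n) := fun t => t • (b - a) + a with hL
  have hLaff : ConvexOn ℝ Set.univ (g ∘ L) := by
    have := hconv.comp_affineMap
      ((LinearMap.toSpanSingleton ℝ _ (b - a)).toAffineMap + AffineMap.const ℝ ℝ a)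
    simpa [hL, Function.comp_def] using this
  have hLd : HasDerivAt L (b - a) 0 := by
    simpa [hL] using ((hasDerivAt_id (0:ℝ)).smul_const (b - a)).add_const a
  have hL0 : L 0 = a := by simp [hL]
  have hgrad2 : HasFDerivAt g ((InnerProductSpace.toDual ℝ _) (gradient g a)) (L 0) := by
    rw [hL0]; exact hgrad
  have hcomp : HasDerivAt (g ∘ L) (⟪gradient g a, b - a⟫) 0 := by
    have h := hgrad2.comp_hasDerivAt 0 hLd
    simpa [InnerProductSpace.toDual_apply_apply] using h
  have hs := hLaff.le_slope_of_hasDerivAt (Set.mem_univ 0) (Set.mem_univ 1) zero_lt_one hcomp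
  have h1 : (g ∘ L) 1 = g b := by simp [hL]
  have h0 : (g ∘ L) 0 = g a := by simp [hL]
  rw [slope_def_field, h1, h0] at hs
  simp only [sub_zero, div_one] at hs
  linarith

lemma zf_smul_le {n : ℕ} {g : EuclideanSpace ℝ (Fin n) → ℝ}
    (hconv : ConvexOn ℝ Set.univ g) (hg0 : g 0 = 0)
    {c : ℝ} (hc0 : 0 ≤ c) (hc1 : c ≤ 1) (z : EuclideanSpace ℝ (Fin n)) :
    g (c • z) ≤ c * g z := by
  have := hconv.2 (Set.mem_univ z) (Set.mem_univ 0) hc0 (by linarith : (0:ℝ) ≤ 1 - c)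
    (by ring)
  simpa [hg0] using this

lemma zf_reindex (w : ℕ → ℝ) (ℓ N : ℕ) :
    ∑ k ∈ Finset.range N, (if ℓ ≤ k then w (k - ℓ) else 0)
      = ∑ j ∈ Finset.range (N - ℓ), w j := by
  induction N with
  | zero => simp
  | succ N ih =>
    rw [Finset.sum_range_succ, ih]
    by_cases h : ℓ ≤ N
    · rw [if_pos h]
      have : N + 1 - ℓ = (N - ℓ) + 1 := by omega
      rw [this, Finset.sum_range_succ]
    · rw [if_neg h]
      have : N + 1 - ℓ = N - ℓ := by omega
      rw [this, add_zero]

/-- Off-by-ℓ Zames–Falb ρ-hard IQC (proof of Theorem 18): for a monotone gradient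
nonlinearity `∇g` of an admissible potential `g`. -/
theorem stmt_7 {n : ℕ} (g : EuclideanSpace ℝ (Fin n) → ℝ)
    (hconv : ConvexOn ℝ Set.univ g) (hdiff : Differentiable ℝ g)
    (hnonneg : ∀ x, 0 ≤ g x) (hg0 : g 0 = 0)
    (ρ : ℝ) (hρ : ρ ∈ Set.Ioc (0 : ℝ) 1) (γ : ℝ) (hγ : γ ∈ Set.Ioc (0 : ℝ) 1)
    (ℓ : ℕ) (hℓ : 1 ≤ ℓ)
    (y : ℕ → EuclideanSpace ℝ (Fin n)) (u : ℕ → EuclideanSpace ℝ (Fin n))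
    (hu : ∀ k, u k = gradient g (y k)) :
    ∀ T : ℕ, 0 ≤ ∑ k ∈ Finset.range (T + 1),
      ρ ^ (-(2 * (k : ℤ))) *
        ⟪u k, y k - (γ * ρ ^ (2 * ℓ)) • (if ℓ ≤ k then y (k - ℓ) else 0)⟫ := by
  obtain ⟨hρ0, hρ1⟩ := hρ
  obtain ⟨hγ0, hγ1⟩ := hγ
  intro T
  set c : ℝ := γ * ρ ^ (2 * ℓ) with hcdef
  have hρ2ℓ : ρ ^ (2 * ℓ) ≤ 1 := pow_le_one₀ hρ0.le hρ1
  have hc0 : 0 ≤ c := mul_nonneg hγ0.le (pow_nonneg hρ0.le _)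
  have hc1 : c ≤ 1 := by
    calc c ≤ 1 * 1 := mul_le_mul hγ1 hρ2ℓ (pow_nonneg hρ0.le _) zero_le_one
    _ = 1 := one_mul 1
  set G : ℕ → ℝ := fun k => g (y k) with hG
  set f : ℕ → ℝ := fun k => ρ ^ (-(2 * (k : ℤ))) * G k with hf
  have hfnn : ∀ k, 0 ≤ f k := fun k => mul_nonneg (zpow_nonneg hρ0.le _) (hnonneg _)
  have hterm : ∀ k ∈ Finset.range (T + 1),
      f k - (if ℓ ≤ k then γ * f (k - ℓ) else 0)
        ≤ ρ ^ (-(2 * (k : ℤ))) * ⟪u k, y k - c • (if ℓ ≤ k then y (k - ℓ) else 0)⟫ := by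
    intro k _
    set z := (if ℓ ≤ k then y (k - ℓ) else 0) with hz
    have hgz : g z = (if ℓ ≤ k then G (k - ℓ) else 0) := by
      by_cases h : ℓ ≤ k <;> simp [hz, h, hg0, hG]
    have h1 : G k - g (c • z) ≤ ⟪u k, y k - c • z⟫ := by
      have hA := zf_grad_ineq hconv hdiff (y k) (c • z)
      rw [hu k]
      rw [inner_sub_right] at hA ⊢
      linarith
    have h2 : g (c • z) ≤ c * g z := zf_smul_le hconv hg0 hc0 hc1 z
    have h3 : G k - c * g z ≤ ⟪u k, y k - c • z⟫ := by linarith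
    have hp : (0:ℝ) < ρ ^ (-(2 * (k : ℤ))) := zpow_pos hρ0 _
    have h4 := mul_le_mul_of_nonneg_left h3 hp.le
    refine le_trans (le_of_eq ?_) h4
    rw [hgz]
    by_cases h : ℓ ≤ k
    · rw [if_pos h, if_pos h]
      have hpow : ρ ^ (-(2 * (k : ℤ))) * ρ ^ (2 * ℓ)
          = ρ ^ (-(2 * ((k - ℓ : ℕ) : ℤ))) := by
        rw [← zpow_natCast ρ (2 * ℓ), ← zpow_add₀ hρ0.ne']
        congr 1
        push_cast [Nat.cast_sub h]
        ring
      simp only [hf, hcdef]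
      linear_combination γ * G (k - ℓ) * hpow
    · rw [if_neg h, if_neg h]
      ring
  have hsum := Finset.sum_le_sum hterm
  rw [Finset.sum_sub_distrib] at hsum
  have hre : ∑ k ∈ Finset.range (T + 1), (if ℓ ≤ k then γ * f (k - ℓ) else 0)
      = ∑ j ∈ Finset.range (T + 1 - ℓ), γ * f j := zf_reindex (fun j => γ * f j) ℓ (T + 1)
  have hle : ∑ j ∈ Finset.range (T + 1 - ℓ), γ * f j
      ≤ ∑ k ∈ Finset.range (T + 1), f k := by
    calc ∑ j ∈ Finset.range (T + 1 - ℓ), γ * f j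
        ≤ ∑ j ∈ Finset.range (T + 1 - ℓ), f j := by
          apply Finset.sum_le_sum
          intro j _
          nlinarith [hfnn j, hγ1, hγ0.le]
      _ ≤ ∑ k ∈ Finset.range (T + 1), f k := by
          apply Finset.sum_le_sum_of_subset_of_nonneg
          · exact Finset.range_subset_range.mpr (by omega)
          · intro k _ _; exact hfnn k
  rw [hre] at hsum
  have : (0:ℝ) ≤ ∑ k ∈ Finset.range (T + 1), f k - ∑ j ∈ Finset.range (T + 1 - ℓ), γ * f j := by
    linarith
  calc (0:ℝ) ≤ _ := this
    _ ≤ _ := hsum
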